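/- For every real b > 1 and every λ ∈ (0,1), ∫₀^λ t^{2b}/(1-t²)^b dt ≤ λ^{2b+1} / (2(b-1)(1-λ²)^{b-1}). -/

import Mathlib

theorem integral_upper_bound (b : ℝ) (hb : 1 < b) (lam : ℝ) (hlam : lam ∈ Set.Ioo (0:ℝ) 1) :
    (∫ t in (0:ℝ)..lam, t ^ (2 * b) / (1 - t ^ 2) ^ b) ≤
      lam ^ (2 * b + 1) / (2 * (b - 1) * (1 - lam ^ 2) ^ (b - 1)) := by
  obtain ⟨hl0, hl1⟩ := hlam
  set F : ℝ → ℝ := fun t => t ^ (2*b+1) * (1 - t^2) ^ (1-b) / (2*(b-1)) with hF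
  set G : ℝ → ℝ := fun t => t ^ (2*b) * ((2*b+1) - 3*t^2) * (1 - t^2) ^ (-b) / (2*(b-1)) with hG
  have hb1 : (0:ℝ) < 2*(b-1) := by linarith
  -- derivative
  have hderiv : ∀ t ∈ Set.Icc (0:ℝ) lam, HasDerivAt F (G t) t := by
    intro t ht
    obtain ⟨ht0, htl⟩ := ht
    have htw : (0:ℝ) < 1 - t^2 := by nlinarith
    have h1 : HasDerivAt (fun t : ℝ => t ^ (2*b+1)) ((2*b+1) * t^(2*b)) t := by
      have h := Real.hasDerivAt_rpow_const (x := t) (p := 2*b+1) (Or.inr (by linarith))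
      rw [show 2*b+1-1 = 2*b from by ring] at h
      exact h
    have hin : HasDerivAt (fun t : ℝ => 1 - t^2) (-(2*t)) t := by
      have : HasDerivAt (fun t : ℝ => 1 - t^2) (0 - 2*t^1) t := by
        exact (hasDerivAt_const t 1).sub ((hasDerivAt_pow 2 t).congr_deriv (by norm_num))
      simpa using this
    have h2 : HasDerivAt (fun t : ℝ => (1 - t^2) ^ (1-b))
        ((1-b) * (1 - t^2)^(-b) * (-(2*t))) t := by
      have hout := Real.hasDerivAt_rpow_const (x := 1 - t^2) (p := 1-b) (Or.inl (ne_of_gt htw))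
      have := hout.comp t hin
      rw [show (1:ℝ)-b-1 = -b by ring] at this
      exact this
    have := (h1.mul h2).div_const (2*(b-1))
    refine this.congr_deriv ?_
    have hw1 : (1 - t^2 : ℝ) ^ (1-b) = (1 - t^2) * (1 - t^2)^(-b) := by
      rw [show (1:ℝ)-b = 1 + -b by ring, Real.rpow_add htw, Real.rpow_one]
    have ht1 : t ^ (2*b+1) = t ^ (2*b) * t := by
      rw [Real.rpow_add' ht0 (by linarith), Real.rpow_one]
    simp only [hG, hw1, ht1]
    ring
  -- continuity helpers
  have hcont1 : Continuous fun t : ℝ => t ^ (2*b) := by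
    rw [continuous_iff_continuousAt]
    intro t
    exact Real.continuousAt_rpow_const t (2*b) (Or.inr (by linarith))
  have hcont2 : ContinuousOn (fun t : ℝ => (1 - t^2) ^ (-b)) (Set.Icc 0 lam) := by
    intro t ht
    obtain ⟨ht0, htl⟩ := ht
    have htw : (0:ℝ) < 1 - t^2 := by nlinarith
    exact ((by fun_prop : ContinuousAt (fun t : ℝ => 1 - t^2) t).rpow_const
      (Or.inl (ne_of_gt htw))).continuousWithinAt
  have hcontG : ContinuousOn G (Set.Icc 0 lam) := by
    apply ContinuousOn.div_const
    exact ((hcont1.continuousOn.mul (by fun_prop)).mul hcont2)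
  have hcontg : ContinuousOn (fun t : ℝ => t ^ (2*b) / (1 - t^2) ^ b) (Set.Icc 0 lam) := by
    apply hcont1.continuousOn.div
    · intro t ht
      obtain ⟨ht0, htl⟩ := ht
      have htw : (0:ℝ) < 1 - t^2 := by nlinarith
      exact ((by fun_prop : ContinuousAt (fun t : ℝ => 1 - t^2) t).rpow_const
        (Or.inl (ne_of_gt htw))).continuousWithinAt
    · intro t ht
      obtain ⟨ht0, htl⟩ := ht
      have htw : (0:ℝ) < 1 - t^2 := by nlinarith
      exact ne_of_gt (Real.rpow_pos_of_pos htw b)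
  have huIcc : Set.uIcc (0:ℝ) lam = Set.Icc 0 lam := Set.uIcc_of_le hl0.le
  have hintG : IntervalIntegrable G MeasureTheory.volume 0 lam :=
    (hcontG.mono (by rw [huIcc])).intervalIntegrable
  have hintg : IntervalIntegrable (fun t : ℝ => t ^ (2*b) / (1 - t^2) ^ b)
      MeasureTheory.volume 0 lam :=
    (hcontg.mono (by rw [huIcc])).intervalIntegrable
  -- pointwise bound
  have hpt : ∀ t ∈ Set.Icc (0:ℝ) lam, t ^ (2*b) / (1 - t^2) ^ b ≤ G t := by
    intro t ht
    obtain ⟨ht0, htl⟩ := ht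
    have htw : (0:ℝ) < 1 - t^2 := by nlinarith
    have hA : (0:ℝ) ≤ t ^ (2*b) * (1 - t^2)^(-b) :=
      mul_nonneg (Real.rpow_nonneg ht0 _) (Real.rpow_nonneg htw.le _)
    have hg : t ^ (2*b) / (1 - t^2) ^ b = t ^ (2*b) * (1 - t^2)^(-b) := by
      rw [Real.rpow_neg htw.le, div_eq_mul_inv]
    have hGe : G t = (t ^ (2*b) * (1 - t^2)^(-b)) * (((2*b+1) - 3*t^2) / (2*(b-1))) := by
      simp only [hG]; ring
    rw [hg, hGe]
    have hfac : (1:ℝ) ≤ ((2*b+1) - 3*t^2) / (2*(b-1)) := by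
      rw [le_div_iff₀ hb1]
      nlinarith
    nlinarith
  have hmono := intervalIntegral.integral_mono_on hl0.le hintg hintG hpt
  have hftc : ∫ t in (0:ℝ)..lam, G t = F lam - F 0 := by
    apply intervalIntegral.integral_eq_sub_of_hasDerivAt
    · intro t ht
      exact hderiv t (huIcc ▸ ht)
    · exact hintG
  have hF0 : F 0 = 0 := by
    simp only [hF]
    rw [Real.zero_rpow (by linarith)]
    simp
  have hFlam : F lam = lam ^ (2*b+1) / (2*(b-1) * (1 - lam^2) ^ (b-1)) := by
    have hw : (0:ℝ) < 1 - lam^2 := by nlinarith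
    have h1 : (1 - lam^2 : ℝ) ^ (1-b) = ((1 - lam^2) ^ (b-1))⁻¹ := by
      rw [show (1:ℝ)-b = -(b-1) by ring, Real.rpow_neg hw.le]
    simp only [hF, h1]
    field_simp
  calc (∫ t in (0:ℝ)..lam, t ^ (2*b) / (1 - t^2) ^ b) ≤ ∫ t in (0:ℝ)..lam, G t := hmono
    _ = F lam - F 0 := hftc
    _ = lam ^ (2*b+1) / (2*(b-1) * (1 - lam^2) ^ (b-1)) := by rw [hF0, hFlam]; ring
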